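/- If a value function v is Network Specific Player Anonymous on g (i.e., v(g|_S) = 0 for all proper subsets S ⊂ N), then the weighted Myerson value satisfies Y_i^{w-MV}(g,v) = (w_i / Σ_{j ∈ N(g)} w_j) · v(g) for each i ∈ N(g); in particular there exists α ∈ ℝ with Y_i^{w-MV}(g,v) = α w_i for all i ∈ N(g). -/
import Mathlib


open Finset

variable {n : ℕ}

/-- A network on player set `Fin n`: a finite set of (unordered) links. -/
abbrev Network (n : ℕ) := Finset (Sym2 (Fin n))

/-- The set of non-isolated players of a network. -/
def players (g : Network n) : Finset (Fin n) :=
  Finset.univ.filter (fun i => ∃ e ∈ g, i ∈ e)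

/-- Harsanyi dividend of a value function at a network. -/
noncomputable def dividend (v : Network n → ℝ) (g' : Network n) : ℝ :=
  ∑ g'' ∈ g'.powerset, (-1 : ℝ) ^ (g'.card - g''.card) * v g''

/-- The weighted Myerson value. -/
noncomputable def wMV (w : Fin n → ℝ) (v : Network n → ℝ) (g : Network n) (i : Fin n) : ℝ :=
  ∑ g' ∈ g.powerset.filter (fun g' => i ∈ players g'),
    (w i / ∑ j ∈ players g', w j) * dividend v g'

/-- Connectivity of two players through links of `g`. -/
def connectedIn (g : Network n) (i j : Fin n) : Prop :=
  Relation.ReflTransGen (fun a b => s(a, b) ∈ g) i j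

open Classical in
/-- The component of `g` containing the link `e`. -/
noncomputable def component (g : Network n) (e : Sym2 (Fin n)) : Network n :=
  g.filter (fun e' => ∃ i ∈ e, ∃ j ∈ e', connectedIn g i j)

/-- The set of components (maximal connected subnetworks) of `g`. -/
noncomputable def components (g : Network n) : Finset (Network n) :=
  g.image (component g)

/-- Component additive value functions. -/
def componentAdditive (v : Network n → ℝ) : Prop :=
  ∀ g : Network n, v g = ∑ h ∈ components g, v h

open Classical in
/-- The restriction `g|_S` of a network to a coalition `S`. -/
noncomputable def restrict (g : Network n) (S : Finset (Fin n)) : Network n :=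
  g.filter (fun e => ∀ i ∈ e, i ∈ S)

/-- The set `g_i` of links of player `i` in `g`. -/
def glinks (g : Network n) (i : Fin n) : Network n :=
  g.filter (fun e => i ∈ e)

/-- On Network Specific Player Anonymous value functions the weighted Myerson value
pays each active player proportionally to her weight. -/
lemma mem_players {g : Network n} {i : Fin n} : i ∈ players g ↔ ∃ e ∈ g, i ∈ e := by
  simp [players]

lemma subset_restrict_iff {g g' : Network n} {S : Finset (Fin n)} (hg' : g' ⊆ g) :
    g' ⊆ restrict g S ↔ players g' ⊆ S := by
  classical
  constructor
  · intro h i hi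
    obtain ⟨e, he, hie⟩ := mem_players.1 hi
    exact (Finset.mem_filter.1 (h he)).2 i hie
  · intro h e he
    exact Finset.mem_filter.2 ⟨hg' he, fun i hie => h (mem_players.2 ⟨e, he, hie⟩)⟩

lemma sum_dividend_powerset (v : Network n → ℝ) (h : Network n) :
    ∑ g' ∈ h.powerset, dividend v g' = v h := by
  classical
  unfold dividend
  rw [Finset.sum_comm' (t' := h.powerset)
      (s' := fun g'' => h.powerset.filter (fun g' => g'' ⊆ g'))
      (by intro x y
          simp only [Finset.mem_powerset, Finset.mem_filter]
          constructor
          · rintro ⟨h1, h2⟩; exact ⟨⟨h1, h2⟩, h2.trans h1⟩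
          · tauto)]
  have key : ∀ g'' ∈ h.powerset,
      (∑ g' ∈ h.powerset.filter (fun g' => g'' ⊆ g'), ((-1 : ℝ)) ^ (g'.card - g''.card))
        = if g'' = h then 1 else 0 := by
    intro g'' hg''
    rw [Finset.mem_powerset] at hg''
    have : ∑ g' ∈ h.powerset.filter (fun g' => g'' ⊆ g'), ((-1 : ℝ)) ^ (g'.card - g''.card)
        = ∑ t ∈ (h \ g'').powerset, ((-1 : ℝ)) ^ t.card := by
      refine Finset.sum_nbij' (fun g' => g' \ g'') (fun t => g'' ∪ t) ?_ ?_ ?_ ?_ ?_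
      · intro a ha
        simp only [Finset.mem_filter, Finset.mem_powerset] at ha ⊢
        exact Finset.sdiff_subset_sdiff ha.1 (le_refl _)
      · intro t ht
        simp only [Finset.mem_powerset] at ht
        simp only [Finset.mem_filter, Finset.mem_powerset]
        exact ⟨Finset.union_subset hg'' (ht.trans (Finset.sdiff_subset)),
          Finset.subset_union_left⟩
      · intro a ha
        simp only [Finset.mem_filter, Finset.mem_powerset] at ha
        show g'' ∪ (a \ g'') = a
        rw [Finset.union_sdiff_of_subset ha.2]
      · intro t ht
        simp only [Finset.mem_powerset] at ht
        show (g'' ∪ t) \ g'' = t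
        rw [Finset.union_sdiff_cancel_left]
        exact Finset.disjoint_of_subset_right ht Finset.sdiff_disjoint.symm
      · intro a ha
        simp only [Finset.mem_filter, Finset.mem_powerset] at ha
        rw [Finset.card_sdiff_of_subset ha.2]
    rw [this]
    have := Finset.sum_powerset_neg_one_pow_card (x := h \ g'')
    have h2 : ∑ t ∈ (h \ g'').powerset, ((-1 : ℝ)) ^ t.card
        = ((∑ m ∈ (h \ g'').powerset, (-1 : ℤ) ^ m.card : ℤ) : ℝ) := by
      push_cast; rfl
    rw [h2, this]
    by_cases hc : h \ g'' = ∅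
    · have : g'' = h := le_antisymm hg'' (Finset.sdiff_eq_empty_iff_subset.1 hc)
      simp [hc, this]
    · have : g'' ≠ h := by
        intro he; subst he; simp at hc
      simp [hc, this]
  calc ∑ g'' ∈ h.powerset, ∑ g' ∈ h.powerset.filter (fun g' => g'' ⊆ g'),
        ((-1:ℝ)) ^ (g'.card - g''.card) * v g''
      = ∑ g'' ∈ h.powerset, (if g'' = h then 1 else 0) * v g'' := by
        refine Finset.sum_congr rfl fun g'' hg'' => ?_
        rw [← Finset.sum_mul, key g'' hg'']
    _ = ∑ g'' ∈ h.powerset, (if g'' = h then v g'' else 0) := by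
        refine Finset.sum_congr rfl fun g'' _ => ?_
        split <;> simp
    _ = v h := by
        rw [Finset.sum_ite_eq' h.powerset h v]
        simp

lemma players_mono {g g' : Network n} (h : g' ⊆ g) : players g' ⊆ players g := by
  intro i hi
  obtain ⟨e, he, hie⟩ := mem_players.1 hi
  exact mem_players.2 ⟨e, h he, hie⟩

theorem wMV_networkSpecificPlayerAnonymity (w : Fin n → ℝ) (hw : ∀ k, 0 < w k)
    (v : Network n → ℝ) (hv : v ∅ = 0) (g : Network n)
    (hNSPA : ∀ S : Finset (Fin n), S ⊂ Finset.univ → v (restrict g S) = 0) :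
    (∀ i ∈ players g, wMV w v g i = w i / (∑ j ∈ players g, w j) * v g) ∧
    ∃ α : ℝ, ∀ i ∈ players g, wMV w v g i = α * w i := by
  classical
  set F : Finset (Fin n) → ℝ :=
    fun S => ∑ g' ∈ g.powerset.filter (fun g' => players g' = S), dividend v g' with hF
  have hrsub : ∀ S, (_root_.restrict g S) ⊆ g := fun S => Finset.filter_subset _ _
  have hfilter_eq : ∀ S T : Finset (Fin n), T ⊆ S →
      g.powerset.filter (fun g' => players g' = T)
        = (_root_.restrict g S).powerset.filter (fun g' => players g' = T) := by
    intro S T hTS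
    ext g'
    simp only [Finset.mem_filter, Finset.mem_powerset]
    constructor
    · rintro ⟨h1, h2⟩
      exact ⟨(subset_restrict_iff h1).2 (h2 ▸ hTS), h2⟩
    · rintro ⟨h1, h2⟩
      exact ⟨h1.trans (hrsub S), h2⟩
  have sumF : ∀ S : Finset (Fin n), ∑ T ∈ S.powerset, F T = v (_root_.restrict g S) := by
    intro S
    rw [← sum_dividend_powerset v (_root_.restrict g S)]
    rw [← Finset.sum_fiberwise_of_maps_to (g := players) (t := S.powerset)
        (fun g' hg' => Finset.mem_powerset.2
          ((subset_restrict_iff ((Finset.mem_powerset.1 hg').trans (hrsub S))).1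
            (Finset.mem_powerset.1 hg'))) (dividend v)]
    refine Finset.sum_congr rfl fun T hT => ?_
    have h0 : F T = ∑ g' ∈ g.powerset.filter (fun g' => players g' = T), dividend v g' := rfl
    rw [h0, hfilter_eq S T (Finset.mem_powerset.1 hT)]
  have Fzero : ∀ S : Finset (Fin n), S ⊂ Finset.univ → F S = 0 := by
    intro S
    induction S using Finset.strongInduction with
    | _ S ih =>
      intro hS
      have h1 := sumF S
      rw [hNSPA S hS] at h1
      rw [← Finset.insert_erase (Finset.mem_powerset_self S),
        Finset.sum_insert (Finset.notMem_erase _ _)] at h1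
      have h2 : ∑ T ∈ S.powerset.erase S, F T = 0 := by
        refine Finset.sum_eq_zero fun T hT => ?_
        rw [Finset.mem_erase, Finset.mem_powerset] at hT
        exact ih T (lt_of_le_of_ne hT.2 hT.1) ((lt_of_le_of_ne hT.2 hT.1).trans hS)
      linarith
  have main : ∀ i : Fin n, wMV w v g i
      = (w i / ∑ j ∈ (Finset.univ : Finset (Fin n)), w j) * F Finset.univ := by
    intro i
    unfold wMV
    rw [← Finset.sum_fiberwise_of_maps_to (g := players)
        (t := (Finset.univ : Finset (Fin n)).powerset)
        (fun g' _ => Finset.mem_powerset.2 (Finset.subset_univ _))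
        (fun g' => (w i / ∑ j ∈ players g', w j) * dividend v g')]
    rw [Finset.sum_eq_single (Finset.univ : Finset (Fin n))]
    · have hstep : ∀ g' ∈ (g.powerset.filter fun g' => i ∈ players g').filter
          (fun g' => players g' = Finset.univ),
          (w i / ∑ j ∈ players g', w j) * dividend v g'
            = (w i / ∑ j ∈ (Finset.univ : Finset (Fin n)), w j) * dividend v g' := by
        intro g' hg'
        rw [(Finset.mem_filter.1 hg').2]
      rw [Finset.sum_congr rfl hstep, ← Finset.mul_sum]
      congr 1
      have h0 : F Finset.univ
          = ∑ g' ∈ g.powerset.filter (fun g' => players g' = Finset.univ), dividend v g' := rfl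
      rw [h0]
      congr 1
      ext g'
      simp only [Finset.mem_filter, Finset.mem_powerset]
      constructor
      · rintro ⟨⟨h1, _⟩, h3⟩; exact ⟨h1, h3⟩
      · rintro ⟨h1, h2⟩
        exact ⟨⟨h1, h2.symm ▸ Finset.mem_univ i⟩, h2⟩
    · intro T hT hTne
      have hTss : T ⊂ Finset.univ :=
        lt_of_le_of_ne (Finset.mem_powerset.1 hT) hTne
      have hstep : ∀ g' ∈ (g.powerset.filter fun g' => i ∈ players g').filter
          (fun g' => players g' = T),
          (w i / ∑ j ∈ players g', w j) * dividend v g'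
            = (w i / ∑ j ∈ T, w j) * dividend v g' := by
        intro g' hg'
        rw [(Finset.mem_filter.1 hg').2]
      rw [Finset.sum_congr rfl hstep, ← Finset.mul_sum]
      by_cases hiT : i ∈ T
      · have hfib : (g.powerset.filter fun g' => i ∈ players g').filter
            (fun g' => players g' = T) = g.powerset.filter (fun g' => players g' = T) := by
          ext g'
          simp only [Finset.mem_filter, Finset.mem_powerset]
          constructor
          · rintro ⟨⟨h1, _⟩, h3⟩; exact ⟨h1, h3⟩
          · rintro ⟨h1, h2⟩; exact ⟨⟨h1, h2.symm ▸ hiT⟩, h2⟩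
        have h0 : F T = ∑ g' ∈ g.powerset.filter (fun g' => players g' = T), dividend v g' := rfl
        rw [hfib, ← h0, Fzero T hTss, mul_zero]
      · have hfib : (g.powerset.filter fun g' => i ∈ players g').filter
            (fun g' => players g' = T) = ∅ := by
          rw [Finset.filter_eq_empty_iff]
          intro g' hg'
          intro heq
          exact hiT (heq ▸ (Finset.mem_filter.1 hg').2)
        rw [hfib, Finset.sum_empty, mul_zero]
    · intro habs
      exact absurd (Finset.mem_powerset.2 (le_refl _)) habs
  by_cases hpg : players g = Finset.univ
  · have hrg : _root_.restrict g Finset.univ = g :=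
      Finset.filter_true_of_mem fun e _ => fun j _ => Finset.mem_univ j
    have hFuniv : F Finset.univ = v g := by
      have h1 := sumF Finset.univ
      rw [hrg, ← Finset.insert_erase (Finset.mem_powerset_self _),
        Finset.sum_insert (Finset.notMem_erase _ _)] at h1
      have h2 : ∑ T ∈ (Finset.univ : Finset (Fin n)).powerset.erase Finset.univ, F T = 0 := by
        refine Finset.sum_eq_zero fun T hT => ?_
        rw [Finset.mem_erase, Finset.mem_powerset] at hT
        exact Fzero T (lt_of_le_of_ne hT.2 hT.1)
      linarith
    constructor
    · intro i _
      rw [main i, hFuniv, hpg]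
    · refine ⟨v g / ∑ j ∈ players g, w j, fun i _ => ?_⟩
      rw [main i, hFuniv, hpg]
      ring
  · have hpss : players g ⊂ Finset.univ := lt_of_le_of_ne (Finset.subset_univ _) hpg
    have hrg : _root_.restrict g (players g) = g :=
      Finset.filter_true_of_mem fun e he => fun j hje => mem_players.2 ⟨e, he, hje⟩
    have hvg : v g = 0 := by
      have := hNSPA (players g) hpss
      rwa [hrg] at this
    have hFuniv : F Finset.univ = 0 := by
      have h0 : F Finset.univ
          = ∑ g' ∈ g.powerset.filter (fun g' => players g' = Finset.univ), dividend v g' := rfl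
      rw [h0]
      have hempty : g.powerset.filter (fun g' => players g' = Finset.univ) = ∅ := by
        rw [Finset.filter_eq_empty_iff]
        intro g' hg'
        intro heq
        exact hpg (Finset.eq_univ_of_forall fun j =>
          players_mono (Finset.mem_powerset.1 hg') (heq.symm ▸ Finset.mem_univ j))
      rw [hempty, Finset.sum_empty]
    constructor
    · intro i _
      rw [main i, hFuniv, hvg, mul_zero, mul_zero]
    · exact ⟨0, fun i _ => by rw [main i, hFuniv, mul_zero, zero_mul]⟩
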